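/- arXiv:1404.3181 — 3 statements merged into one kernel-verified Lean document; each statement's English description precedes it below -/
import Mathlib

section
/- Let B be a blanket set for target t with respect to source s, i.e., every path from s to t passes through B. For a random walk RW(s,L) of geometric length L ~ Geom(α), let H_B denote the first node of B hit by the walk (H_B = ⊥ if B is never hit). Then π_s(t) = ∑_{w ∈ B} P[H_B = w] · π_w(t). -/
open scoped BigOperators

variable {V : Type*} [Fintype V] [DecidableEq V]

/-- Out-degree of `u` in the directed graph with adjacency predicate `adj`. -/
def outDeg (adj : V → V → Bool) (u : V) : ℕ :=
  (Finset.univ.filter (fun v => adj u v)).card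

/-- The random-walk transition matrix `W`: `W x y = 1 / d_out(x)` if `(x,y)` is an edge,
and `0` otherwise. -/
noncomputable def walkMatrix (adj : V → V → Bool) : Matrix V V ℝ :=
  Matrix.of fun x y => if adj x y then (1 : ℝ) / outDeg adj x else 0

/-- Entries of powers of an entrywise-nonnegative, row-substochastic matrix are
nonnegative, and the rows of the powers are substochastic as well. -/
lemma substochastic_pow (A : Matrix V V ℝ) (h0 : ∀ x y, 0 ≤ A x y)
    (h1 : ∀ x, ∑ y, A x y ≤ 1) :
    ∀ (n : ℕ) (x : V), (∀ y, 0 ≤ (A ^ n) x y) ∧ ∑ y, (A ^ n) x y ≤ 1 := by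
  intro n
  induction n with
  | zero =>
    intro x
    refine ⟨fun y => ?_, ?_⟩
    · simp only [pow_zero, Matrix.one_apply]
      split <;> norm_num
    · simp [Matrix.one_apply]
  | succ n ih =>
    intro x
    have hmul : ∀ y, (A ^ (n+1)) x y = ∑ z, (A ^ n) x z * A z y := by
      intro y; rw [pow_succ]; rfl
    constructor
    · intro y
      rw [hmul]
      exact Finset.sum_nonneg fun z _ => mul_nonneg ((ih x).1 z) (h0 z y)
    · calc ∑ y, (A ^ (n+1)) x y = ∑ y, ∑ z, (A ^ n) x z * A z y := by
            simp only [hmul]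
        _ = ∑ z, (A ^ n) x z * ∑ y, A z y := by
            rw [Finset.sum_comm]; simp [Finset.mul_sum]
        _ ≤ ∑ z, (A ^ n) x z * 1 := by
            refine Finset.sum_le_sum fun z _ => ?_
            exact mul_le_mul_of_nonneg_left (h1 z) ((ih x).1 z)
        _ ≤ 1 := by simpa using (ih x).2

lemma pow_entry_nonneg (A : Matrix V V ℝ) (h0 : ∀ x y, 0 ≤ A x y)
    (h1 : ∀ x, ∑ y, A x y ≤ 1) (n : ℕ) (x y : V) : 0 ≤ (A ^ n) x y :=
  (substochastic_pow A h0 h1 n x).1 y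

lemma pow_entry_le_one (A : Matrix V V ℝ) (h0 : ∀ x y, 0 ≤ A x y)
    (h1 : ∀ x, ∑ y, A x y ≤ 1) (n : ℕ) (x y : V) : (A ^ n) x y ≤ 1 := by
  calc (A ^ n) x y ≤ ∑ z, (A ^ n) x z :=
        Finset.single_le_sum (f := fun z => (A ^ n) x z)
          (fun z _ => (substochastic_pow A h0 h1 n x).1 z) (Finset.mem_univ y)
    _ ≤ 1 := (substochastic_pow A h0 h1 n x).2

/-- blanket-set decomposition.  `B` is a blanket set for `t` w.r.t. `s`:
every path from `s` to `t` passes through `B` (encoded: if `t ∉ B` then there is no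
`B`-avoiding walk from `s` to `t`, where `M` is the walk matrix with the rows of `B`
zeroed out, so that `(M^i) s w` is the probability that the walk first hits `B` at node
`w ∈ B` at step `i`).  Then, with `π_s(t) = P[V_L = t]` for a geometric-length walk,
`π_s(t) = ∑_{w ∈ B} P[H_B = w] · π_w(t)`, where
`P[H_B = w] = ∑_{i≥0} (1-α)^i (M^i)(s,w)`. -/
theorem ppr_blanket_decomposition
    (adj : V → V → Bool) (hdeg : ∀ u : V, 0 < outDeg adj u)
    (α : ℝ) (hα₀ : 0 < α) (hα₁ : α < 1)
    (B : Finset V) (s t : V) (hs : s ∉ B)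
    (M : Matrix V V ℝ)
    (hM : M = Matrix.of fun x y => if x ∈ B then 0 else walkMatrix adj x y)
    (hblanket : t ∉ B → ∀ i : ℕ, (M ^ i) s t = 0) :
    (∑' i : ℕ, α * (1 - α) ^ i * ((walkMatrix adj) ^ i) s t)
      = ∑ w ∈ B,
          (∑' i : ℕ, (1 - α) ^ i * (M ^ i) s w)
            * (∑' j : ℕ, α * (1 - α) ^ j * ((walkMatrix adj) ^ j) w t) := by
  set W := walkMatrix adj with hW
  -- basic properties of W
  have hW0 : ∀ x y, 0 ≤ W x y := by
    intro x y
    simp only [hW, walkMatrix, Matrix.of_apply]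
    split <;> positivity
  have hWrow : ∀ x, ∑ y, W x y ≤ 1 := by
    intro x
    have hcard : (0:ℝ) < (outDeg adj x : ℝ) := by exact_mod_cast hdeg x
    have : ∑ y, W x y = 1 := by
      simp only [hW, walkMatrix, Matrix.of_apply]
      rw [← Finset.sum_filter]
      rw [Finset.sum_const, nsmul_eq_mul]
      rw [show (Finset.univ.filter fun v => adj x v = true).card = outDeg adj x from rfl]
      field_simp
    simp [this]
  have hM0 : ∀ x y, 0 ≤ M x y := by
    intro x y
    rw [hM]
    simp only [Matrix.of_apply]
    split
    · exact le_refl 0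
    · exact hW0 x y
  have hMrow : ∀ x, ∑ y, M x y ≤ 1 := by
    intro x
    rw [hM]
    simp only [Matrix.of_apply]
    by_cases hx : x ∈ B <;> simp [hx, hWrow x]
  -- the difference D = W - M is supported on rows of B and agrees with W there
  have hD : ∀ x y, (W - M) x y = if x ∈ B then W x y else 0 := by
    intro x y
    rw [Matrix.sub_apply, hM]
    simp only [Matrix.of_apply]
    by_cases hx : x ∈ B <;> simp [hx]
  -- key matrix identity
  have matId : ∀ n : ℕ,
      W ^ n = M ^ n + ∑ i ∈ Finset.range n, M ^ i * (W - M) * W ^ (n - 1 - i) := by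
    intro n
    induction n with
    | zero => simp
    | succ n ih =>
      have h0 : W ^ (n + 1) = M * W ^ n + (W - M) * W ^ n := by
        rw [sub_mul, pow_succ']
        abel
      rw [h0]
      nth_rewrite 1 [ih]
      rw [mul_add, Finset.mul_sum, ← pow_succ']
      rw [Finset.sum_range_succ']
      simp only [Nat.add_sub_cancel, Nat.sub_zero, pow_zero, one_mul]
      have h1 : ∀ i ∈ Finset.range n,
          M * (M ^ i * (W - M) * W ^ (n - 1 - i))
            = M ^ (i + 1) * (W - M) * W ^ (n - (i + 1)) := by
        intro i hi
        have hi' : i < n := Finset.mem_range.mp hi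
        have he : n - (i + 1) = n - 1 - i := by omega
        rw [he, pow_succ', mul_assoc, mul_assoc, mul_assoc]
      rw [Finset.sum_congr rfl h1]
      abel
  -- entrywise identity
  have key : ∀ n : ℕ, (W ^ n) s t
      = ∑ i ∈ Finset.range (n + 1), ∑ w ∈ B, (M ^ i) s w * (W ^ (n - i)) w t := by
    intro n
    have entry : ∀ i, i < n →
        (M ^ i * (W - M) * W ^ (n - 1 - i)) s t
          = ∑ w ∈ B, (M ^ i) s w * (W ^ (n - i)) w t := by
      intro i hi
      have hDW : ∀ w, ((W - M) * W ^ (n - 1 - i)) w t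
          = if w ∈ B then (W ^ (n - i)) w t else 0 := by
        intro w
        rw [Matrix.mul_apply]
        by_cases hw : w ∈ B
        · simp only [hw, if_true]
          have hni : n - i = (n - 1 - i) + 1 := by omega
          rw [hni, pow_succ', Matrix.mul_apply]
          exact Finset.sum_congr rfl fun y _ => by rw [hD]; simp [hw]
        · simp only [hw, if_false]
          refine Finset.sum_eq_zero fun y _ => ?_
          rw [hD]; simp [hw]
      rw [mul_assoc, Matrix.mul_apply]
      simp only [hDW, mul_ite, mul_zero]
      rw [Finset.sum_ite_mem, Finset.univ_inter]
    have last : (M ^ n) s t = ∑ w ∈ B, (M ^ n) s w * (W ^ (n - n)) w t := by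
      simp only [Nat.sub_self, pow_zero, Matrix.one_apply, mul_ite, mul_one, mul_zero]
      rw [Finset.sum_ite_eq' B t (fun w => (M ^ n) s w)]
      by_cases ht : t ∈ B
      · simp [ht]
      · simp [ht, hblanket ht n]
    have := congrArg (fun A : Matrix V V ℝ => A s t) (matId n)
    simp only [Matrix.add_apply, Matrix.sum_apply] at this
    rw [this, Finset.sum_range_succ, Finset.sum_congr rfl (fun i hi =>
      entry i (Finset.mem_range.mp hi)), ← last]
    ring
  -- summability facts
  have h1α : 0 ≤ 1 - α := by linarith
  have h1α' : 1 - α < 1 := by linarith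
  have hgeo : Summable fun i : ℕ => (1 - α) ^ i :=
    summable_geometric_of_lt_one h1α h1α'
  have hfnorm : ∀ w : V, Summable fun i : ℕ => ‖(1 - α) ^ i * (M ^ i) s w‖ := by
    intro w
    refine Summable.of_nonneg_of_le (fun i => norm_nonneg _) (fun i => ?_) hgeo
    rw [norm_mul]
    have hle : ‖(M ^ i) s w‖ ≤ 1 := by
      rw [Real.norm_eq_abs, abs_of_nonneg (pow_entry_nonneg M hM0 hMrow i s w)]
      exact pow_entry_le_one M hM0 hMrow i s w
    calc ‖(1 - α) ^ i‖ * ‖(M ^ i) s w‖ ≤ ‖(1 - α) ^ i‖ * 1 :=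
          mul_le_mul_of_nonneg_left hle (norm_nonneg _)
      _ = (1 - α) ^ i := by
          rw [mul_one, Real.norm_eq_abs, abs_of_nonneg (pow_nonneg h1α i)]
  have hgnorm : ∀ w : V, Summable fun j : ℕ => ‖α * (1 - α) ^ j * (W ^ j) w t‖ := by
    intro w
    refine Summable.of_nonneg_of_le (fun j => norm_nonneg _) (fun j => ?_)
      (hgeo.mul_left α)
    rw [norm_mul, norm_mul]
    have hle : ‖(W ^ j) w t‖ ≤ 1 := by
      rw [Real.norm_eq_abs, abs_of_nonneg (pow_entry_nonneg W hW0 hWrow j w t)]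
      exact pow_entry_le_one W hW0 hWrow j w t
    have e1 : ‖α‖ = α := by rw [Real.norm_eq_abs, abs_of_pos hα₀]
    have e2 : ‖(1 - α) ^ j‖ = (1 - α) ^ j := by
      rw [Real.norm_eq_abs, abs_of_nonneg (pow_nonneg h1α j)]
    rw [e1, e2]
    calc α * (1 - α) ^ j * ‖(W ^ j) w t‖ ≤ α * (1 - α) ^ j * 1 :=
          mul_le_mul_of_nonneg_left hle (by positivity)
      _ = α * (1 - α) ^ j := mul_one _
  -- assemble
  have step1 : ∀ n : ℕ, α * (1 - α) ^ n * (W ^ n) s t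
      = ∑ w ∈ B, ∑ i ∈ Finset.range (n + 1),
          ((1 - α) ^ i * (M ^ i) s w) * (α * (1 - α) ^ (n - i) * (W ^ (n - i)) w t) := by
    intro n
    rw [key n]
    simp_rw [Finset.mul_sum]
    rw [Finset.sum_comm]
    refine Finset.sum_congr rfl fun w _ => Finset.sum_congr rfl fun i hi => ?_
    have hin : i ≤ n := Nat.lt_succ_iff.mp (Finset.mem_range.mp hi)
    have : (1 - α) ^ i * (1 - α) ^ (n - i) = (1 - α) ^ n := by
      rw [← pow_add, Nat.add_sub_cancel' hin]
    rw [← this]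
    ring
  calc (∑' n : ℕ, α * (1 - α) ^ n * (W ^ n) s t)
      = ∑' n : ℕ, ∑ w ∈ B, ∑ i ∈ Finset.range (n + 1),
          ((1 - α) ^ i * (M ^ i) s w) * (α * (1 - α) ^ (n - i) * (W ^ (n - i)) w t) :=
        tsum_congr step1
    _ = ∑ w ∈ B, ∑' n : ℕ, ∑ i ∈ Finset.range (n + 1),
          ((1 - α) ^ i * (M ^ i) s w) * (α * (1 - α) ^ (n - i) * (W ^ (n - i)) w t) := by
        refine Summable.tsum_finsetSum fun w _ => ?_
        exact (summable_norm_sum_mul_range_of_summable_norm (hfnorm w) (hgnorm w)).of_norm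
    _ = ∑ w ∈ B,
          (∑' i : ℕ, (1 - α) ^ i * (M ^ i) s w)
            * (∑' j : ℕ, α * (1 - α) ^ j * (W ^ j) w t) := by
        refine Finset.sum_congr rfl fun w _ => ?_
        exact (tsum_mul_tsum_eq_tsum_sum_range_of_summable_norm (hfnorm w) (hgnorm w)).symm
end

section
/- If ε_r < α and s ∉ T_t(ε_r), then the probability that a random walk RW(s,L) of geometric length L ~ Geom(α) hits the frontier set F_t(ε_r) is at least π_s(t)/ε_r. -/
open scoped BigOperators

set_option linter.unusedSectionVars false

variable {V : Type*} [Fintype V] [DecidableEq V]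

/-- Personalized PageRank, characterized as the probability that a geometric-length
(`L ~ Geom(α)`) random walk from `a` ends at `b`. -/
noncomputable def pprSeries (adj : V → V → Bool) (α : ℝ) (a b : V) : ℝ :=
  ∑' i : ℕ, α * (1 - α) ^ i * ((walkMatrix adj) ^ i) a b

lemma walkMatrix_nonneg (adj : V → V → Bool) (x y : V) : 0 ≤ walkMatrix adj x y := by
  simp only [walkMatrix, Matrix.of_apply]; split <;> positivity

lemma walkMatrix_row_sum (adj : V → V → Bool) (hdeg : ∀ u : V, 0 < outDeg adj u) (x : V) :
    ∑ y, walkMatrix adj x y = 1 := by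
  simp only [walkMatrix, Matrix.of_apply, Finset.sum_ite, Finset.sum_const_zero, add_zero,
    Finset.sum_const, nsmul_eq_mul]
  have h : ((outDeg adj x : ℝ)) ≠ 0 := by exact_mod_cast (hdeg x).ne'
  rw [show (Finset.univ.filter (fun v => adj x v)).card = outDeg adj x from rfl]
  field_simp

lemma walkPow_nonneg (adj : V → V → Bool) (n : ℕ) (x y : V) :
    0 ≤ (walkMatrix adj ^ n) x y := by
  induction n generalizing x y with
  | zero => simp [Matrix.one_apply]; positivity
  | succ n ih =>
    rw [pow_succ', Matrix.mul_apply]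
    exact Finset.sum_nonneg fun z _ => mul_nonneg (walkMatrix_nonneg adj x z) (ih z y)

lemma walkPow_row_sum (adj : V → V → Bool) (hdeg : ∀ u : V, 0 < outDeg adj u) (n : ℕ) (x : V) :
    ∑ y, (walkMatrix adj ^ n) x y = 1 := by
  induction n generalizing x with
  | zero => simp [Matrix.one_apply]
  | succ n ih =>
    simp only [pow_succ', Matrix.mul_apply]
    rw [Finset.sum_comm]
    simp only [← Finset.mul_sum]
    simp only [fun z => ih z]
    simpa using walkMatrix_row_sum adj hdeg x

lemma walkPow_le_one (adj : V → V → Bool) (hdeg : ∀ u : V, 0 < outDeg adj u) (n : ℕ) (x y : V) :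
    (walkMatrix adj ^ n) x y ≤ 1 := by
  calc (walkMatrix adj ^ n) x y ≤ ∑ z, (walkMatrix adj ^ n) x z :=
        Finset.single_le_sum (fun z _ => walkPow_nonneg adj n x z) (Finset.mem_univ y)
    _ = 1 := walkPow_row_sum adj hdeg n x

lemma pow_entry_mono (A B : Matrix V V ℝ) (hA0 : ∀ x y, 0 ≤ A x y)
    (hAB : ∀ x y, A x y ≤ B x y) (hB0 : ∀ x y, 0 ≤ B x y) (n : ℕ) (x y : V) :
    0 ≤ (A ^ n) x y ∧ (A ^ n) x y ≤ (B ^ n) x y := by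
  induction n generalizing x y with
  | zero => simp [Matrix.one_apply]; split <;> norm_num
  | succ n ih =>
    simp only [pow_succ', Matrix.mul_apply]
    constructor
    · exact Finset.sum_nonneg fun z _ => mul_nonneg (hA0 x z) (ih z y).1
    · exact Finset.sum_le_sum fun z _ => mul_le_mul (hAB x z) (ih z y).2 (ih z y).1 (hB0 x z)

lemma summable_ppr (adj : V → V → Bool) (hdeg : ∀ u : V, 0 < outDeg adj u)
    (α : ℝ) (hα₀ : 0 < α) (hα₁ : α < 1) (a b : V) :
    Summable (fun i : ℕ => α * (1 - α) ^ i * ((walkMatrix adj) ^ i) a b) := by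
  have hgeo : Summable (fun i : ℕ => α * (1 - α) ^ i) :=
    (summable_geometric_of_lt_one (by linarith) (by linarith)).mul_left α
  apply Summable.of_nonneg_of_le (fun i => ?_) (fun i => ?_) hgeo
  · exact mul_nonneg (mul_nonneg hα₀.le (pow_nonneg (by linarith) i)) (walkPow_nonneg adj i a b)
  · have h1 := walkPow_le_one adj hdeg i a b
    have h0 : (0:ℝ) ≤ α * (1-α)^i := mul_nonneg hα₀.le (pow_nonneg (by linarith) i)
    nlinarith [walkPow_nonneg adj i a b]

lemma ppr_self_ge (adj : V → V → Bool) (hdeg : ∀ u : V, 0 < outDeg adj u)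
    (α : ℝ) (hα₀ : 0 < α) (hα₁ : α < 1) (t : V) : α ≤ pprSeries adj α t t := by
  have := Summable.le_tsum (summable_ppr adj hdeg α hα₀ hα₁ t t) 0
    (fun i _ => mul_nonneg (mul_nonneg hα₀.le (pow_nonneg (by linarith) i))
      (walkPow_nonneg adj i t t))
  simpa [Matrix.one_apply, pprSeries] using this

lemma Mpow_zero_at_t (adj : V → V → Bool) (hdeg : ∀ u : V, 0 < outDeg adj u)
    (α : ℝ) (hα₀ : 0 < α) (hα₁ : α < 1)
    (εr : ℝ) (hεrα : εr < α) (t : V) (F : Finset V)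
    (hF : F = Finset.univ.filter (fun w =>
        pprSeries adj α w t ≤ εr ∧ ∃ v : V, adj w v ∧ εr < pprSeries adj α v t))
    (M : Matrix V V ℝ)
    (hM : M = Matrix.of fun x y => if x ∈ F then 0 else walkMatrix adj x y) :
    ∀ n (x : V), pprSeries adj α x t ≤ εr → (M ^ n) x t = 0 := by
  intro n
  induction n with
  | zero =>
    intro x hx
    simp only [pow_zero, Matrix.one_apply]
    split
    · next h =>
      subst h
      exact absurd (le_trans (ppr_self_ge adj hdeg α hα₀ hα₁ x) hx) (by linarith)
    · rfl
  | succ n ih =>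
    intro x hx
    rw [pow_succ', Matrix.mul_apply]
    apply Finset.sum_eq_zero
    intro z _
    by_cases hz : pprSeries adj α z t ≤ εr
    · rw [ih z hz, mul_zero]
    · have hMxz : M x z = 0 := by
        rw [hM]
        simp only [Matrix.of_apply]
        by_cases hxF : x ∈ F
        · simp [hxF]
        · rw [if_neg hxF]
          by_cases hadj : adj x z
          · exact absurd (by
              rw [hF]
              simp only [Finset.mem_filter, Finset.mem_univ, true_and]
              exact ⟨hx, z, hadj, lt_of_not_ge hz⟩) hxF
          · simp [walkMatrix, hadj]
      rw [hMxz, zero_mul]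

lemma first_hit_decomp (M R : Matrix V V ℝ) (n : ℕ) :
    (M + R) ^ n = M ^ n + ∑ i ∈ Finset.range n, M ^ i * (R * (M + R) ^ (n - 1 - i)) := by
  induction n with
  | zero => simp
  | succ n ih =>
    have h1 : (M + R) ^ (n + 1) = M * (M + R) ^ n + R * (M + R) ^ n := by
      rw [pow_succ', add_mul]
    rw [h1, ih, mul_add, Finset.mul_sum, Finset.sum_range_succ', ← pow_succ']
    have hsum : ∀ i ∈ Finset.range n, M * (M ^ i * (R * (M + R) ^ (n - 1 - i)))
        = M ^ (i + 1) * (R * (M + R) ^ (n + 1 - 1 - (i + 1))) := by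
      intro i _
      rw [← mul_assoc, ← pow_succ']
      congr 3
      omega
    rw [Finset.sum_congr rfl hsum]
    simp only [pow_zero, one_mul, Nat.add_sub_cancel]
    rw [← ih, Nat.sub_zero]
    abel

/-- if `ε_r < α` and `s ∉ T_t(ε_r)`, the probability that a geometric-length
random walk from `s` hits the frontier set `F_t(ε_r)` is at least `π_s(t)/ε_r`.  Here the
hitting probability is `∑_{w ∈ F} ∑_{i ≥ 0} (1-α)^i (M^i)(s,w)`, where `M` is the walk
matrix with the rows of `F` zeroed out, so `(M^i)(s,w)` is the probability of first hitting
`F` at node `w` at step `i`. -/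
theorem walk_hits_frontier_with_prob
    (adj : V → V → Bool) (hdeg : ∀ u : V, 0 < outDeg adj u)
    (α : ℝ) (hα₀ : 0 < α) (hα₁ : α < 1)
    (εr : ℝ) (hεr₀ : 0 < εr) (hεrα : εr < α)
    (s t : V) (hs : pprSeries adj α s t ≤ εr)
    (F : Finset V)
    (hF : F = Finset.univ.filter (fun w =>
        pprSeries adj α w t ≤ εr ∧ ∃ v : V, adj w v ∧ εr < pprSeries adj α v t))
    (M : Matrix V V ℝ)
    (hM : M = Matrix.of fun x y => if x ∈ F then 0 else walkMatrix adj x y) :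
    pprSeries adj α s t / εr ≤ ∑ w ∈ F, ∑' i : ℕ, (1 - α) ^ i * (M ^ i) s w := by
  classical
  have h1α : (0:ℝ) ≤ 1 - α := by linarith
  have h1α' : (1:ℝ) - α < 1 := by linarith
  set R : Matrix V V ℝ := Matrix.of (fun x y => if x ∈ F then walkMatrix adj x y else 0)
    with hR
  have hMR : M + R = walkMatrix adj := by
    ext x y
    by_cases hx : x ∈ F <;> simp [hM, hR, Matrix.add_apply, hx]
  have hM0 : ∀ x y, 0 ≤ M x y := by
    intro x y; rw [hM]; simp only [Matrix.of_apply]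
    split
    · exact le_refl 0
    · exact walkMatrix_nonneg adj x y
  have hMW : ∀ x y, M x y ≤ walkMatrix adj x y := by
    intro x y; rw [hM]; simp only [Matrix.of_apply]
    split
    · exact walkMatrix_nonneg adj x y
    · exact le_refl _
  have hMn := fun n x y => pow_entry_mono M (walkMatrix adj) hM0 hMW (walkMatrix_nonneg adj) n x y
  have hsumM : ∀ w, Summable (fun i : ℕ => (1 - α) ^ i * (M ^ i) s w) := by
    intro w
    apply Summable.of_nonneg_of_le
      (fun i => mul_nonneg (pow_nonneg h1α i) (hMn i s w).1) (fun i => ?_)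
      (summable_geometric_of_lt_one h1α h1α')
    calc (1 - α) ^ i * (M ^ i) s w
        ≤ (1 - α) ^ i * 1 := by
          apply mul_le_mul_of_nonneg_left _ (pow_nonneg h1α i)
          exact le_trans (hMn i s w).2 (walkPow_le_one adj hdeg i s w)
      _ = (1 - α) ^ i := mul_one _
  have hMzero := Mpow_zero_at_t adj hdeg α hα₀ hα₁ εr hεrα t F hF M hM
  -- the first-hit rewriting of (W^n) s t
  have hRW : ∀ (m : ℕ) (w : V), (R * walkMatrix adj ^ m) w t =
      if w ∈ F then (walkMatrix adj ^ (m + 1)) w t else 0 := by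
    intro m w
    by_cases hw : w ∈ F
    · rw [if_pos hw, pow_succ', Matrix.mul_apply, Matrix.mul_apply]
      exact Finset.sum_congr rfl fun y _ => by rw [hR]; simp [hw]
    · rw [if_neg hw, Matrix.mul_apply]
      apply Finset.sum_eq_zero
      intro y _
      rw [hR]; simp [hw]
  have hWn : ∀ n, (walkMatrix adj ^ n) s t
      = ∑ i ∈ Finset.range n, ∑ w ∈ F, (M ^ i) s w * (walkMatrix adj ^ (n - i)) w t := by
    intro n
    have hd : walkMatrix adj ^ n
        = M ^ n + ∑ i ∈ Finset.range n, M ^ i * (R * walkMatrix adj ^ (n - 1 - i)) := by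
      conv_lhs => rw [← hMR]
      rw [first_hit_decomp]
      simp only [hMR]
    rw [hd, Matrix.add_apply, hMzero n s hs, zero_add, Matrix.sum_apply]
    apply Finset.sum_congr rfl
    intro i hi
    rw [Matrix.mul_apply]
    rw [Finset.sum_congr rfl (fun w _ => by rw [hRW])]
    simp only [mul_ite, mul_zero, Finset.sum_ite_mem, Finset.univ_inter]
    apply Finset.sum_congr rfl
    intro w _
    have h4 : n - 1 - i + 1 = n - i := by
      have := Finset.mem_range.mp hi
      omega
    rw [h4]
  rw [div_le_iff₀ hεr₀]
  unfold pprSeries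
  apply Summable.tsum_le_of_sum_le (summable_ppr adj hdeg α hα₀ hα₁ s t)
  intro S
  obtain ⟨N, hSN⟩ : ∃ N, S ⊆ Finset.range N :=
    ⟨(S.sup id) + 1, fun n hn => Finset.mem_range.mpr (Nat.lt_succ_of_le (Finset.le_sup (f := id) hn))⟩
  have hnonneg : ∀ n : ℕ, 0 ≤ α * (1 - α) ^ n * (walkMatrix adj ^ n) s t := fun n =>
    mul_nonneg (mul_nonneg hα₀.le (pow_nonneg h1α n)) (walkPow_nonneg adj n s t)
  refine le_trans (Finset.sum_le_sum_of_subset_of_nonneg hSN (fun n _ _ => hnonneg n)) ?_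
  calc ∑ n ∈ Finset.range N, α * (1 - α) ^ n * (walkMatrix adj ^ n) s t
      = ∑ n ∈ Finset.range N, ∑ i ∈ Finset.range n, ∑ w ∈ F,
          α * (1 - α) ^ n * ((M ^ i) s w * (walkMatrix adj ^ (n - i)) w t) := by
        apply Finset.sum_congr rfl
        intro n _
        rw [hWn n]
        simp only [Finset.mul_sum]
    _ = ∑ i ∈ Finset.range N, ∑ n ∈ Finset.Ico (i + 1) N, ∑ w ∈ F,
          α * (1 - α) ^ n * ((M ^ i) s w * (walkMatrix adj ^ (n - i)) w t) := by
        apply Finset.sum_comm'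
        intro n i
        simp only [Finset.mem_range, Finset.mem_Ico]
        omega
    _ ≤ ∑ i ∈ Finset.range N, ∑ w ∈ F, (1 - α) ^ i * (M ^ i) s w * εr := by
        apply Finset.sum_le_sum
        intro i _
        rw [Finset.sum_comm]
        apply Finset.sum_le_sum
        intro w hw
        have hπw : pprSeries adj α w t ≤ εr := by
          rw [hF] at hw
          exact (Finset.mem_filter.mp hw).2.1
        rw [Finset.sum_Ico_eq_sum_range]
        have hrw : ∀ j, α * (1 - α) ^ (i + 1 + j) *
              ((M ^ i) s w * (walkMatrix adj ^ (i + 1 + j - i)) w t)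
            = (1 - α) ^ i * (M ^ i) s w *
              (α * (1 - α) ^ (j + 1) * (walkMatrix adj ^ (j + 1)) w t) := by
          intro j
          have h2 : i + 1 + j - i = j + 1 := by omega
          have h3 : i + 1 + j = i + (j + 1) := by omega
          rw [h2, h3, pow_add]
          ring
        rw [Finset.sum_congr rfl (fun j _ => hrw j), ← Finset.mul_sum]
        apply mul_le_mul_of_nonneg_left _ (mul_nonneg (pow_nonneg h1α i) (hMn i s w).1)
        calc ∑ j ∈ Finset.range (N - (i + 1)),
              α * (1 - α) ^ (j + 1) * (walkMatrix adj ^ (j + 1)) w t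
            ≤ ∑ j ∈ Finset.range (N - (i + 1) + 1),
              α * (1 - α) ^ j * (walkMatrix adj ^ j) w t := by
              rw [Finset.sum_range_succ']
              have h0 : 0 ≤ α * (1 - α) ^ 0 * (walkMatrix adj ^ 0) w t :=
                mul_nonneg (mul_nonneg hα₀.le (pow_nonneg h1α 0)) (walkPow_nonneg adj 0 w t)
              linarith
          _ ≤ pprSeries adj α w t := by
              unfold pprSeries
              exact Summable.sum_le_tsum _ (fun j _ => mul_nonneg
                (mul_nonneg hα₀.le (pow_nonneg h1α j)) (walkPow_nonneg adj j w t))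
                (summable_ppr adj hdeg α hα₀ hα₁ w t)
          _ ≤ εr := hπw
    _ = (∑ w ∈ F, ∑ i ∈ Finset.range N, (1 - α) ^ i * (M ^ i) s w) * εr := by
        rw [Finset.sum_comm]
        simp only [← Finset.sum_mul]
    _ ≤ (∑ w ∈ F, ∑' i : ℕ, (1 - α) ^ i * (M ^ i) s w) * εr := by
        apply mul_le_mul_of_nonneg_right _ hεr₀.le
        apply Finset.sum_le_sum
        intro w _
        exact Summable.sum_le_tsum _ (fun i _ => mul_nonneg (pow_nonneg h1α i) (hMn i s w).1) (hsumM w)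
end

section
/- Let X_1, …, X_k be i.i.d. random variables with values in [0, ε_r] and E[X_i] = π, where k = c·ε_r/δ for c = max(48·8e·ln(100), 4·log₂(100)). Let π̂ = (1/k)∑ X_i. Then P[|π̂ − π| > max(δ, π)/4] ≤ 0.01. -/
open MeasureTheory ProbabilityTheory

/-- abstract FAST-PPR accuracy theorem.  Let `X_1, …, X_k` be i.i.d. random
variables with values in `[0, ε_r]` and mean `π`, where `k = c ε_r / δ` with
`c = max (48·8e·ln 100) (4·log₂ 100)`.  Then the empirical mean `π̂ = (1/k) ∑ X_i`
satisfies `P[|π̂ − π| > max(δ, π)/4] ≤ 0.01`. -/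
theorem fastppr_accuracy
    {Ω : Type*} [MeasurableSpace Ω] (μ : Measure Ω) [IsProbabilityMeasure μ]
    (δ εr : ℝ) (hδ : 0 < δ) (hεr : 0 < εr)
    (c : ℝ) (hc : c = max (48 * 8 * Real.exp 1 * Real.log 100) (4 * Real.logb 2 100))
    (k : ℕ) (hk : (k : ℝ) = c * εr / δ)
    (X : Fin k → Ω → ℝ)
    (hmeas : ∀ i, Measurable (X i))
    (hrange : ∀ i ω, X i ω ∈ Set.Icc (0 : ℝ) εr)
    (hindep : iIndepFun X μ)
    (hident : ∀ i j, Measure.map (X i) μ = Measure.map (X j) μ)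
    (π : ℝ) (hmean : ∀ i, ∫ ω, X i ω ∂μ = π) :
    μ {ω | max δ π / 4 < |(1 / (k : ℝ)) * (∑ i, X i ω) - π|} ≤ ENNReal.ofReal 0.01 := by
  -- c ≥ 1600
  have hexp2 : (2 : ℝ) ≤ Real.exp 1 := by
    have := Real.add_one_le_exp (1 : ℝ); linarith
  have hlog4 : (4 : ℝ) ≤ Real.log 100 := by
    rw [Real.le_log_iff_exp_le (by norm_num)]
    have h1 : Real.exp 1 ≤ 2.7182818286 := Real.exp_one_lt_d9.le
    have h0 : (0:ℝ) ≤ Real.exp 1 := (Real.exp_pos 1).le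
    calc Real.exp 4 = (Real.exp 1) ^ 4 := by
          rw [← Real.exp_nat_mul]; norm_num
      _ ≤ 2.7182818286 ^ 4 := by exact pow_le_pow_left₀ h0 h1 4
      _ ≤ 100 := by norm_num
  have hc1600 : (1600 : ℝ) ≤ c := by
    have : (1600 : ℝ) ≤ 48 * 8 * Real.exp 1 * Real.log 100 := by nlinarith
    rw [hc]; exact this.trans (le_max_left _ _)
  have hcpos : (0 : ℝ) < c := by linarith
  have hkpos : (0 : ℝ) < (k : ℝ) := by
    rw [hk]; positivity
  have hknat : 0 < k := by exact_mod_cast hkpos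
  -- mean is nonnegative
  have hπ0 : 0 ≤ π := by
    have i0 : Fin k := ⟨0, hknat⟩
    rw [← hmean i0]
    exact integral_nonneg fun ω => (hrange i0 ω).1
  -- ℒ² membership and integrability
  have hmem : ∀ i, MemLp (X i) 2 μ := fun i =>
    memLp_of_bounded (Filter.Eventually.of_forall (hrange i))
      (hmeas i).aestronglyMeasurable 2
  have hint : ∀ i, Integrable (X i) μ := fun i => (hmem i).integrable one_le_two
  set S : Ω → ℝ := fun ω => ∑ i, X i ω with hS
  have hmemS : MemLp S 2 μ := by
    have := memLp_finset_sum' (μ := μ) Finset.univ (f := X) (fun i _ => hmem i)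
    convert this using 1
    ext ω; simp [hS]
  have hES : ∫ ω, S ω ∂μ = (k : ℝ) * π := by
    rw [hS]
    rw [integral_finset_sum _ fun i _ => hint i]
    simp [hmean, Finset.card_univ]
  -- variance bound
  have hvarX : ∀ i : Fin k, variance (X i) μ ≤ εr * π := by
    intro i
    rw [variance_eq_sub (hmem i)]
    have hsq : ∫ ω, (X i ω) ^ 2 ∂μ ≤ εr * π := by
      have hb : ∀ ω, (X i ω) ^ 2 ≤ εr * X i ω := by
        intro ω
        obtain ⟨h0, h1⟩ := hrange i ω
        nlinarith
      calc ∫ ω, (X i ω) ^ 2 ∂μ ≤ ∫ ω, εr * X i ω ∂μ :=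
            integral_mono (hmem i).integrable_sq ((hint i).const_mul εr) hb
        _ = εr * π := by rw [integral_const_mul, hmean i]
      done
    have : μ[(X i) ^ 2] = ∫ ω, (X i ω) ^ 2 ∂μ := by rfl
    rw [this, hmean i]
    nlinarith [sq_nonneg π]
  have hvarS : variance S μ ≤ (k : ℝ) * (εr * π) := by
    have hsum : variance (∑ i, X i) μ = ∑ i : Fin k, variance (X i) μ :=
      IndepFun.variance_sum (fun i _ => hmem i)
        (fun i _ j _ hij => hindep.indepFun hij)
    have hSeq : S = ∑ i, X i := by ext ω; simp [hS]
    rw [hSeq, hsum]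
    calc (∑ i : Fin k, variance (X i) μ) ≤ ∑ _i : Fin k, εr * π :=
          Finset.sum_le_sum fun i _ => hvarX i
      _ = (k : ℝ) * (εr * π) := by simp [Finset.card_univ, mul_comm]
  -- Chebyshev
  set t : ℝ := max δ π / 4 with ht
  have htpos : 0 < t := by
    have : 0 < max δ π := lt_max_of_lt_left hδ
    rw [ht]; linarith
  have hktpos : 0 < (k : ℝ) * t := mul_pos hkpos htpos
  have hcheb := meas_ge_le_variance_div_sq (μ := μ) hmemS hktpos
  -- event inclusion
  have hsub : {ω | t < |(1 / (k : ℝ)) * (∑ i, X i ω) - π|}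
      ⊆ {ω | (k : ℝ) * t ≤ |S ω - μ[S]|} := by
    intro ω hω
    simp only [Set.mem_setOf_eq] at hω ⊢
    rw [hES]
    have heq : (1 / (k : ℝ)) * (∑ i, X i ω) - π = (S ω - (k : ℝ) * π) / (k : ℝ) := by
      field_simp [hS]
      rfl
    rw [heq, abs_div, abs_of_pos hkpos, lt_div_iff₀ hkpos] at hω
    linarith [hω]
  -- final numeric bound
  have hbound : variance S μ / ((k : ℝ) * t) ^ 2 ≤ 0.01 := by
    have h1 : variance S μ / ((k : ℝ) * t) ^ 2 ≤ (k : ℝ) * (εr * π) / ((k : ℝ) * t) ^ 2 := by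
      gcongr
    refine h1.trans ?_
    have hkt2 : ((k : ℝ) * t) ^ 2 = (k : ℝ) ^ 2 * t ^ 2 := by ring
    have hkval : (k : ℝ) * δ = c * εr := by
      rw [hk]; field_simp
    have hmaxpos : 0 < max δ π := lt_max_of_lt_left hδ
    have hmax : max δ π * max δ π * 1600 ≤ max δ π * max δ π * c := by
      nlinarith
    have key : (k : ℝ) * (εr * π) * 100 ≤ ((k : ℝ) * t) ^ 2 := by
      have hδπ : δ * π ≤ max δ π * max δ π :=
        mul_le_mul (le_max_left δ π) (le_max_right δ π) hπ0 hmaxpos.le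
      have hεr' : εr = (k : ℝ) * δ / c := by
        rw [eq_div_iff hcpos.ne']; linarith [hkval]
      have heq2 : (k : ℝ) * (εr * π) * 100 = ((k:ℝ)^2 * (δ * π) * 100) / c := by
        rw [hεr']; ring
      have hk2 : (0:ℝ) ≤ (k:ℝ)^2 := by positivity
      rw [heq2, hkt2, ht, div_le_iff₀ hcpos]
      nlinarith [mul_le_mul_of_nonneg_left hmax hk2, mul_le_mul_of_nonneg_left hδπ hk2,
        mul_pos hmaxpos hmaxpos]
    rw [div_le_iff₀ (by positivity)]
    linarith [key]
  calc μ {ω | t < |(1 / (k : ℝ)) * (∑ i, X i ω) - π|}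
      ≤ μ {ω | (k : ℝ) * t ≤ |S ω - μ[S]|} := measure_mono hsub
    _ ≤ ENNReal.ofReal (variance S μ / ((k : ℝ) * t) ^ 2) := hcheb
    _ ≤ ENNReal.ofReal 0.01 := ENNReal.ofReal_le_ofReal hbound
end
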